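/- Let G^h, K^h ∈ L²(Ω, ℝ^{3×3}) with K^h skew-symmetric almost everywhere, limsup_{h→0}(‖G^h‖_{L²} + ‖K^h‖_{L⁴}) < ∞, and set E^h := (√((Id + hK^h + h²G^h)ᵀ(Id + hK^h + h²G^h)) − Id)/h². Then there exist measurable sets S^h ⊂ Ω with |Ω∖S^h| → 0 such that, with χ^h the indicator of S^h, lim_{h→0} ‖χ^h·(E^h − (sym G^h − ½(K^h)²))‖_{L²} = 0. -/

import Mathlib

set_option maxHeartbeats 1000000

open Matrix MeasureTheory Filter
open scoped ENNReal Topology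

noncomputable def frob {m : Type*} [Fintype m] (A : Matrix m m ℝ) : ℝ :=
  Real.sqrt (∑ i, ∑ j, (A i j) ^ 2)

noncomputable def symPart {m : Type*} [Fintype m] (A : Matrix m m ℝ) : Matrix m m ℝ :=
  (1 / 2 : ℝ) • (A + Aᵀ)

/-- The positive semidefinite square root, as `Matrix.PosSemidef.sqrt` was defined in Mathlib
(Dec 2024); it has since been removed. -/
noncomputable def Matrix.PosSemidef.sqrt {n 𝕜 : Type*} [Fintype n] [RCLike 𝕜] [DecidableEq n]
    [PartialOrder 𝕜] {A : Matrix n n 𝕜} (hA : A.PosSemidef) : Matrix n n 𝕜 :=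
  hA.1.eigenvectorUnitary.1 * diagonal ((↑) ∘ (√·) ∘ hA.1.eigenvalues) *
  (star hA.1.eigenvectorUnitary : Matrix n n 𝕜)

/-- The strain `E^h = (√((I+hK+h²G)ᵀ(I+hK+h²G)) − I)/h²`. -/
noncomputable def strainE (h : ℝ) (K G : Matrix (Fin 3) (Fin 3) ℝ) :
    Matrix (Fin 3) (Fin 3) ℝ :=
  (1 / h ^ 2 : ℝ) •
    ((Matrix.posSemidef_conjTranspose_mul_self (1 + h • K + (h ^ 2 : ℝ) • G)).sqrt - 1)

lemma Matrix.PosSemidef.posSemidef_sqrt {n : Type*} [Fintype n] [DecidableEq n]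
    {A : Matrix n n ℝ} (hA : A.PosSemidef) : hA.sqrt.PosSemidef := by
  unfold Matrix.PosSemidef.sqrt
  rw [Matrix.star_eq_conjTranspose]
  apply Matrix.PosSemidef.mul_mul_conjTranspose_same
  refine Matrix.posSemidef_diagonal_iff.2 ?_
  intro i
  simp [Real.sqrt_nonneg]

lemma Matrix.PosSemidef.sqrt_mul_self {n : Type*} [Fintype n] [DecidableEq n]
    {A : Matrix n n ℝ} (hA : A.PosSemidef) : hA.sqrt * hA.sqrt = A := by
  have hU := hA.1.eigenvectorUnitary.2
  rw [Unitary.mem_iff] at hU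
  unfold Matrix.PosSemidef.sqrt
  conv_rhs => rw [hA.1.spectral_theorem, Unitary.conjStarAlgAut_apply]
  calc _ = (hA.1.eigenvectorUnitary : Matrix n n ℝ) *
        (diagonal ((RCLike.ofReal : ℝ → ℝ) ∘ (√·) ∘ hA.1.eigenvalues) *
          ((star hA.1.eigenvectorUnitary : Matrix n n ℝ) * (hA.1.eigenvectorUnitary : Matrix n n ℝ)) *
          diagonal ((RCLike.ofReal : ℝ → ℝ) ∘ (√·) ∘ hA.1.eigenvalues)) *
        (star hA.1.eigenvectorUnitary : Matrix n n ℝ) := by simp only [Matrix.mul_assoc]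
    _ = _ := by
      rw [hU.1, Matrix.mul_one, diagonal_mul_diagonal]
      congr 3
      funext i
      simp [Real.mul_self_sqrt (hA.eigenvalues_nonneg i)]

section frobbasic

attribute [local instance] Matrix.frobeniusNormedAddCommGroup Matrix.frobeniusNormedRing Matrix.frobeniusNormSMulClass
set_option linter.unusedSectionVars false

variable {m : Type*} [Fintype m] [DecidableEq m]

lemma frob_eq_norm (A : Matrix m m ℝ) : frob A = ‖A‖ := by
  rw [Matrix.frobenius_norm_def, frob, Real.sqrt_eq_rpow]
  congr 1
  refine Finset.sum_congr rfl fun i _ => Finset.sum_congr rfl fun j _ => ?_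
  rw [Real.norm_eq_abs]
  show A i j ^ (2:ℕ) = |A i j| ^ ((2:ℕ):ℝ)
  rw [Real.rpow_natCast]
  exact (sq_abs _).symm

lemma frob_nonneg (A : Matrix m m ℝ) : 0 ≤ frob A := Real.sqrt_nonneg _

lemma frob_add_le (A B : Matrix m m ℝ) : frob (A + B) ≤ frob A + frob B := by
  simp only [frob_eq_norm]; exact norm_add_le A B

lemma frob_mul_le (A B : Matrix m m ℝ) : frob (A * B) ≤ frob A * frob B := by
  simp only [frob_eq_norm]; exact norm_mul_le A B

lemma frob_smul (c : ℝ) (A : Matrix m m ℝ) : frob (c • A) = |c| * frob A := by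
  simp only [frob_eq_norm]; rw [norm_smul, Real.norm_eq_abs]

lemma frob_transpose (A : Matrix m m ℝ) : frob Aᵀ = frob A := by
  simp only [frob_eq_norm]; exact Matrix.frobenius_norm_transpose A

lemma frob_neg (A : Matrix m m ℝ) : frob (-A) = frob A := by
  simp only [frob_eq_norm]; exact norm_neg A

lemma frob_sub_le (A B : Matrix m m ℝ) : frob (A - B) ≤ frob A + frob B := by
  simp only [frob_eq_norm]; exact norm_sub_le A B

end frobbasic

section spectral
set_option linter.unusedSectionVars false
variable {n : Type*} [Fintype n] [DecidableEq n]

lemma frob_eq_sqrt_trace (A : Matrix n n ℝ) : frob A = Real.sqrt (Matrix.trace (Aᵀ * A)) := by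
  rw [frob]
  congr 1
  rw [Matrix.trace, Finset.sum_comm]
  refine Finset.sum_congr rfl fun i _ => ?_
  simp [Matrix.diag, Matrix.mul_apply, sq]

lemma frob_conj (U N : Matrix n n ℝ) (h1 : Uᵀ * U = 1) (h2 : U * Uᵀ = 1) :
    frob (U * N * Uᵀ) = frob N := by
  rw [frob_eq_sqrt_trace, frob_eq_sqrt_trace (A := N)]
  congr 1
  have : (U * N * Uᵀ)ᵀ * (U * N * Uᵀ) = U * (Nᵀ * N) * Uᵀ := by
    simp only [Matrix.transpose_mul, Matrix.transpose_transpose]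
    calc U * (Nᵀ * Uᵀ) * (U * N * Uᵀ) = U * (Nᵀ * ((Uᵀ * U) * N)) * Uᵀ := by
          noncomm_ring
      _ = U * (Nᵀ * N) * Uᵀ := by rw [h1, one_mul]
  rw [this, Matrix.trace_mul_cycle, ← Matrix.mul_assoc, h1, one_mul]

lemma frob_diagonal (v : n → ℝ) : frob (Matrix.diagonal v) = Real.sqrt (∑ i, v i ^ 2) := by
  rw [frob]
  congr 1
  refine Finset.sum_congr rfl fun i _ => ?_
  rw [Finset.sum_eq_single i]
  · simp
  · intro j _ hj; simp [Matrix.diagonal_apply_ne' v hj]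
  · simp

lemma key_sqrt_bound (P : Matrix n n ℝ) (hP : P.PosSemidef) :
    frob ((hP.sqrt - 1) * (hP.sqrt - 1)) ≤ frob (P - 1) ^ 2 := by
  set S := hP.sqrt with hSdef
  have hS : S.PosSemidef := hP.posSemidef_sqrt
  have hH : S.IsHermitian := hS.1
  set U : Matrix n n ℝ := (hH.eigenvectorUnitary : Matrix n n ℝ) with hUdef
  set s : n → ℝ := hH.eigenvalues with hsdef
  have hsnn : ∀ i, 0 ≤ s i := hS.eigenvalues_nonneg
  have hmem := hH.eigenvectorUnitary.2
  rw [Unitary.mem_iff] at hmem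
  have hU1 : Uᵀ * U = 1 := by
    have := hmem.1
    simpa [Matrix.star_eq_conjTranspose, Matrix.conjTranspose_eq_transpose_of_trivial] using this
  have hU2 : U * Uᵀ = 1 := by
    have := hmem.2
    simpa [Matrix.star_eq_conjTranspose, Matrix.conjTranspose_eq_transpose_of_trivial] using this
  have hspec : S = U * Matrix.diagonal s * Uᵀ := by
    have := hH.spectral_theorem
    simpa [Matrix.star_eq_conjTranspose] using this
  have hconjmul : ∀ v w : n → ℝ,
      (U * Matrix.diagonal v * Uᵀ) * (U * Matrix.diagonal w * Uᵀ)
        = U * Matrix.diagonal (fun i => v i * w i) * Uᵀ := by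
    intro v w
    calc (U * Matrix.diagonal v * Uᵀ) * (U * Matrix.diagonal w * Uᵀ)
        = U * (Matrix.diagonal v * ((Uᵀ * U) * Matrix.diagonal w)) * Uᵀ := by noncomm_ring
      _ = U * Matrix.diagonal (fun i => v i * w i) * Uᵀ := by
          rw [hU1, one_mul, Matrix.diagonal_mul_diagonal]
  have hone : (1 : Matrix n n ℝ) = U * Matrix.diagonal (fun _ => (1:ℝ)) * Uᵀ := by
    rw [Matrix.diagonal_one, mul_one, hU2]
  have hDdef : S - 1 = U * Matrix.diagonal (fun i => s i - 1) * Uᵀ := by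
    rw [hspec]
    conv_lhs => rw [hone]
    rw [← Matrix.sub_mul, ← Matrix.mul_sub, Matrix.diagonal_sub]
  have hP1 : P - 1 = U * Matrix.diagonal (fun i => s i ^ 2 - 1) * Uᵀ := by
    have hPS : P = S * S := (hP.sqrt_mul_self).symm
    rw [hPS, hspec, hconjmul]
    conv_lhs => rw [hone]
    rw [← Matrix.sub_mul, ← Matrix.mul_sub, Matrix.diagonal_sub]
    congr 2
    funext i
    simp [sq]
  have hDD : (S - 1) * (S - 1) = U * Matrix.diagonal (fun i => (s i - 1) ^ 2) * Uᵀ := by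
    rw [hDdef, hconjmul]
    congr 2
    funext i
    simp [sq]
  rw [hDD, hP1, frob_conj _ _ hU1 hU2, frob_conj _ _ hU1 hU2,
    frob_diagonal, frob_diagonal]
  have h1 : ∑ i, ((s i - 1) ^ 2) ^ 2 ≤ (∑ i, (s i - 1) ^ 2) ^ 2 :=
    Finset.sum_sq_le_sq_sum_of_nonneg (fun i _ => sq_nonneg _)
  have h2 : ∑ i, (s i - 1) ^ 2 ≤ ∑ i, (s i ^ 2 - 1) ^ 2 := by
    refine Finset.sum_le_sum fun i _ => ?_
    have : s i ^ 2 - 1 = (s i - 1) * (s i + 1) := by ring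
    rw [this, mul_pow]
    nlinarith [sq_nonneg (s i - 1), hsnn i, sq_nonneg (s i)]
  calc Real.sqrt (∑ i, ((s i - 1) ^ 2) ^ 2) ≤ Real.sqrt ((∑ i, (s i - 1) ^ 2) ^ 2) :=
        Real.sqrt_le_sqrt h1
    _ = ∑ i, (s i - 1) ^ 2 := Real.sqrt_sq (Finset.sum_nonneg fun i _ => sq_nonneg _)
    _ ≤ ∑ i, (s i ^ 2 - 1) ^ 2 := h2
    _ = Real.sqrt (∑ i, (s i ^ 2 - 1) ^ 2) ^ 2 :=
        (Real.sq_sqrt (Finset.sum_nonneg fun i _ => sq_nonneg _)).symm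

end spectral

lemma scalar_bound (r b k fR fP fDD : ℝ) (hr0 : 0 < r) (hr1 : r ≤ 1) (hb0 : 0 ≤ b)
    (hk0 : 0 ≤ k) (hb : r ^ 2 * b ≤ 1) (hk : r * k ≤ 1)
    (e1 : fR ≤ 2 * r ^ 6 * k * b + r ^ 8 * b ^ 2)
    (e2 : fP ≤ 2 * r ^ 4 * b + r ^ 4 * k ^ 2 + fR) (e3 : fDD ≤ fP ^ 2)
    (hfR0 : 0 ≤ fR) (hfP0 : 0 ≤ fP) :
    fR + fDD ≤ 34 * r ^ 5 * (b + k ^ 2) := by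
  have hr5 : (0:ℝ) ≤ r ^ 5 := by positivity
  have h3b : r ^ 3 * b ≤ 1 := by nlinarith
  have hfR5 : fR ≤ 3 * r ^ 5 * b := by
    nlinarith [mul_nonneg (mul_nonneg hr5 hb0) (sub_nonneg.2 hk),
      mul_nonneg (mul_nonneg hr5 hb0) (sub_nonneg.2 h3b)]
  have h4b : r ^ 4 * b ≤ r ^ 2 := by nlinarith [sq_nonneg r]
  have hrk2 : r ^ 2 * k ^ 2 ≤ 1 := by nlinarith [mul_nonneg hr0.le hk0]
  have h4k : r ^ 4 * k ^ 2 ≤ r ^ 2 := by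
    nlinarith [mul_nonneg (sq_nonneg r) (sub_nonneg.2 hrk2)]
  have h5b : 3 * r ^ 5 * b ≤ 3 * r ^ 2 := by
    nlinarith [mul_nonneg (mul_nonneg (sq_nonneg r) hb0) (sub_nonneg.2 h3b)]
  have hfP6 : fP ≤ 6 * r ^ 2 := by linarith
  have hr2 : r ^ 2 ≤ 1 := by nlinarith
  have q1 : r ^ 5 * b * (1 - r) ≥ 0 := mul_nonneg (mul_nonneg hr5 hb0) (by linarith)
  have q2 : r ^ 5 * k ^ 2 * (1 - r) ≥ 0 :=
    mul_nonneg (mul_nonneg hr5 (sq_nonneg k)) (by linarith)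
  have q3 : r ^ 5 * b * (1 - r ^ 2) ≥ 0 := mul_nonneg (mul_nonneg hr5 hb0) (by linarith)
  have hDD' : fDD ≤ 30 * r ^ 5 * b + 6 * r ^ 5 * k ^ 2 := by
    have e2' : fP ≤ 2 * r ^ 4 * b + r ^ 4 * k ^ 2 + 3 * r ^ 5 * b := by linarith
    have hm := mul_le_mul hfP6 e2' hfP0 (by positivity : (0:ℝ) ≤ 6 * r ^ 2)
    have t1 : 6 * r ^ 2 * (2 * r ^ 4 * b) ≤ 12 * r ^ 5 * b := by nlinarith [q1]
    have t2 : 6 * r ^ 2 * (r ^ 4 * k ^ 2) ≤ 6 * r ^ 5 * k ^ 2 := by nlinarith [q2]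
    have t3 : 6 * r ^ 2 * (3 * r ^ 5 * b) ≤ 18 * r ^ 5 * b := by nlinarith [q3]
    have : fP ^ 2 ≤ fP * (6 * r ^ 2) := by nlinarith
    nlinarith [e3]
  nlinarith [mul_nonneg hr5 hb0, mul_nonneg hr5 (sq_nonneg k)]

lemma pointwise_bound (h : ℝ) (h0 : 0 < h) (h1 : h ≤ 1) (K G : Matrix (Fin 3) (Fin 3) ℝ)
    (hKt : Kᵀ = -K) (hK : Real.sqrt h * frob K ≤ 1) (hG : h * frob G ≤ 1) :
    frob (strainE h K G - (symPart G - (1 / 2 : ℝ) • (K * K)))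
      ≤ 17 * Real.sqrt h * (frob G + frob K ^ 2) := by
  set A : Matrix (Fin 3) (Fin 3) ℝ := 1 + h • K + (h ^ 2 : ℝ) • G with hA
  set P : Matrix (Fin 3) (Fin 3) ℝ := Aᴴ * A with hPdef
  have hP : P.PosSemidef := Matrix.posSemidef_conjTranspose_mul_self A
  set Sq := (Matrix.posSemidef_conjTranspose_mul_self A).sqrt with hSq
  set D : Matrix (Fin 3) (Fin 3) ℝ := Sq - 1 with hD
  set M : Matrix (Fin 3) (Fin 3) ℝ := symPart G - (1 / 2 : ℝ) • (K * K) with hM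
  set R : Matrix (Fin 3) (Fin 3) ℝ := (h ^ 3 : ℝ) • (Gᵀ * K - K * G) + (h ^ 4 : ℝ) • (Gᵀ * G)
    with hR
  -- algebraic identity for P - 1
  have hX : P - 1 = (2 * h ^ 2 : ℝ) • M + R := by
    rw [hPdef, Matrix.conjTranspose_eq_transpose_of_trivial, hA, hM, hR, symPart]
    simp only [Matrix.transpose_add, Matrix.transpose_smul, Matrix.transpose_one, hKt]
    simp only [Matrix.add_mul, Matrix.mul_add, Matrix.sub_mul, Matrix.mul_sub,
      smul_mul_assoc, mul_smul_comm, one_mul, mul_one, smul_smul, smul_neg, neg_mul,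
      Matrix.neg_mul, Matrix.mul_neg]
    module
  -- D * D + 2 D = P - 1
  have hsq : Sq * Sq = P := hP.sqrt_mul_self
  have hDD : D * D + (2 : ℝ) • D = P - 1 := by
    rw [hD]
    have : (Sq - 1) * (Sq - 1) = Sq * Sq - Sq - Sq + 1 := by noncomm_ring
    rw [this, hsq]
    module
  -- main decomposition
  have h2ne : (2 * h ^ 2 : ℝ) ≠ 0 := by positivity
  have hE : strainE h K G = (1 / h ^ 2 : ℝ) • D := by
    rw [strainE, hD, hSq, hA]
  have h2D : (2 : ℝ) • D = ((2 * h ^ 2 : ℝ) • M + R) - D * D := by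
    rw [← hX, ← hDD]; abel
  have hmain : strainE h K G - M = (1 / (2 * h ^ 2) : ℝ) • (R - D * D) := by
    calc strainE h K G - M = (1 / (2 * h ^ 2) : ℝ) • ((2:ℝ) • D) - M := by
          rw [hE, smul_smul]
          congr 2
          field_simp
      _ = (1 / (2 * h ^ 2) : ℝ) • (((2 * h ^ 2 : ℝ) • M + R) - D * D) - M := by rw [h2D]
      _ = (1 / (2 * h ^ 2) : ℝ) • (R - D * D) := by
          rw [smul_sub, smul_add, smul_smul,
            show (1 / (2 * h ^ 2) : ℝ) * (2 * h ^ 2) = 1 by field_simp, one_smul]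
          module
  -- frobenius estimates
  set b := frob G with hb
  set k := frob K with hk'
  have hb0 : 0 ≤ b := frob_nonneg G
  have hk0 : 0 ≤ k := frob_nonneg K
  have e1 : frob R ≤ 2 * h ^ 3 * k * b + h ^ 4 * b ^ 2 := by
    have t1 := frob_add_le ((h ^ 3 : ℝ) • (Gᵀ * K - K * G)) ((h ^ 4 : ℝ) • (Gᵀ * G))
    rw [frob_smul, frob_smul, abs_of_nonneg (by positivity : (0:ℝ) ≤ h ^ 3),
      abs_of_nonneg (by positivity : (0:ℝ) ≤ h ^ 4)] at t1
    have t2 := (frob_sub_le (Gᵀ * K) (K * G)).trans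
      (add_le_add ((frob_mul_le Gᵀ K).trans_eq (by rw [frob_transpose])) (frob_mul_le K G))
    have t3 := (frob_mul_le Gᵀ G).trans_eq (by rw [frob_transpose])
    have hfgk : frob (Gᵀ * K - K * G) ≤ 2 * b * k := by
      calc frob (Gᵀ * K - K * G) ≤ frob G * frob K + frob K * frob G := t2
        _ = 2 * b * k := by ring
    calc frob R ≤ h ^ 3 * frob (Gᵀ * K - K * G) + h ^ 4 * frob (Gᵀ * G) := t1
      _ ≤ h ^ 3 * (2 * b * k) + h ^ 4 * (b * b) :=
          add_le_add (mul_le_mul_of_nonneg_left hfgk (by positivity))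
            (mul_le_mul_of_nonneg_left t3 (by positivity))
      _ = 2 * h ^ 3 * k * b + h ^ 4 * b ^ 2 := by ring
  have eM : frob M ≤ b + k ^ 2 / 2 := by
    have t1 := frob_sub_le ((1 / 2 : ℝ) • (G + Gᵀ)) ((1 / 2 : ℝ) • (K * K))
    rw [frob_smul, frob_smul] at t1
    have t2 := (frob_add_le G Gᵀ).trans_eq (by rw [frob_transpose])
    have t3 := frob_mul_le K K
    calc frob M ≤ |1/2| * frob (G + Gᵀ) + |1/2| * frob (K * K) := t1
      _ ≤ |1/2| * (b + b) + |1/2| * (k * k) :=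
          add_le_add (mul_le_mul_of_nonneg_left t2 (abs_nonneg _))
            (mul_le_mul_of_nonneg_left t3 (abs_nonneg _))
      _ = b + k ^ 2 / 2 := by rw [abs_of_nonneg (by norm_num : (0:ℝ) ≤ 1/2)]; ring
  have e2 : frob (P - 1) ≤ 2 * h ^ 2 * b + h ^ 2 * k ^ 2 + frob R := by
    rw [hX]
    calc frob ((2 * h ^ 2 : ℝ) • M + R) ≤ frob ((2 * h ^ 2 : ℝ) • M) + frob R :=
          frob_add_le _ _
      _ = 2 * h ^ 2 * frob M + frob R := by
          rw [frob_smul, abs_of_nonneg (by positivity : (0:ℝ) ≤ 2 * h ^ 2)]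
      _ ≤ 2 * h ^ 2 * (b + k ^ 2 / 2) + frob R :=
          add_le_add_left (mul_le_mul_of_nonneg_left eM (by positivity)) _
      _ = 2 * h ^ 2 * b + h ^ 2 * k ^ 2 + frob R := by ring
  have e3 : frob (D * D) ≤ frob (P - 1) ^ 2 := by
    rw [hD, hSq]
    exact key_sqrt_bound P hP
  -- put together
  set r := Real.sqrt h with hrdef
  have hr0 : 0 < r := Real.sqrt_pos.2 h0
  have hr1 : r ≤ 1 := by
    rw [hrdef, show (1:ℝ) = Real.sqrt 1 by rw [Real.sqrt_one]]
    exact Real.sqrt_le_sqrt h1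
  have hrh : r ^ 2 = h := Real.sq_sqrt h0.le
  have hbr : r ^ 2 * b ≤ 1 := by rw [hrh]; exact hG
  have hkr : r * k ≤ 1 := hK
  have e1' : frob R ≤ 2 * r ^ 6 * k * b + r ^ 8 * b ^ 2 := by
    have : h ^ 3 = r ^ 6 := by rw [← hrh]; ring
    have h2 : h ^ 4 = r ^ 8 := by rw [← hrh]; ring
    rw [← this, ← h2]; exact e1
  have e2' : frob (P - 1) ≤ 2 * r ^ 4 * b + r ^ 4 * k ^ 2 + frob R := by
    have : h ^ 2 = r ^ 4 := by rw [← hrh]; ring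
    rw [← this]; exact e2
  have hsum : frob R + frob (D * D) ≤ 34 * r ^ 5 * (b + k ^ 2) :=
    scalar_bound r b k (frob R) (frob (P - 1)) (frob (D * D)) hr0 hr1 hb0 hk0 hbr hkr
      e1' e2' e3 (frob_nonneg _) (frob_nonneg _)
  rw [hmain, frob_smul, abs_of_nonneg (by positivity : (0:ℝ) ≤ 1 / (2 * h ^ 2))]
  have hfsub : frob (R - D * D) ≤ frob R + frob (D * D) := frob_sub_le _ _
  have hh2 : h ^ 2 = r ^ 4 := by rw [← hrh]; ring
  calc 1 / (2 * h ^ 2) * frob (R - D * D) ≤ 1 / (2 * h ^ 2) * (34 * r ^ 5 * (b + k ^ 2)) :=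
        mul_le_mul_of_nonneg_left (hfsub.trans hsum) (by positivity)
    _ = 17 * r * (b + k ^ 2) := by
        rw [hh2]
        field_simp
        ring

lemma meas_bound {α : Type*} [MeasurableSpace α] (μ : Measure α) (f : α → ℝ)
    (hf : AEStronglyMeasurable f μ) (a : ℝ) (ha : 0 < a) (p : ℝ≥0∞) (hp0 : p ≠ 0)
    (hpt : p ≠ ∞) :
    μ {x | 1 < a * f x} ≤ ENNReal.ofReal a ^ p.toReal * eLpNorm f p μ ^ p.toReal := by
  have hsub : {x | 1 < a * f x} ⊆ {x | ENNReal.ofReal a⁻¹ ≤ (‖f x‖₊ : ℝ≥0∞)} := by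
    intro x hx
    simp only [Set.mem_setOf_eq] at hx ⊢
    have hfx : a⁻¹ < f x := by
      by_contra hcon
      push_neg at hcon
      have h2 := mul_le_mul_of_nonneg_left hcon ha.le
      rw [mul_inv_cancel₀ ha.ne'] at h2
      linarith
    calc ENNReal.ofReal a⁻¹ ≤ ENNReal.ofReal (f x) := ENNReal.ofReal_le_ofReal hfx.le
      _ = (‖f x‖₊ : ℝ≥0∞) := (Real.enorm_eq_ofReal ((inv_pos.2 ha).le.trans hfx.le)).symm
  have hε : ENNReal.ofReal a⁻¹ ≠ 0 := ne_of_gt (ENNReal.ofReal_pos.2 (inv_pos.2 ha))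
  refine (measure_mono hsub).trans ?_
  have := meas_ge_le_mul_pow_eLpNorm_enorm (μ := μ) hp0 hpt hf hε
    (fun h => absurd h ENNReal.ofReal_ne_top)
  rw [ENNReal.ofReal_inv_of_pos ha, inv_inv] at this
  rw [ENNReal.ofReal_inv_of_pos ha]
  exact this


lemma continuous_frob {m : Type*} [Fintype m] : Continuous (frob (m := m)) := by
  unfold frob
  refine Real.continuous_sqrt.comp (continuous_finset_sum _ fun i _ => ?_)
  exact continuous_finset_sum _ fun j _ => ((continuous_apply_apply i j).pow 2)

/-- with `K^h` skew and bounds on `‖G^h‖_{L²}`, `‖K^h‖_{L⁴}`, there are sets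
`S^h` with `|Ω∖S^h| → 0` on which `E^h` is `L²`-close to `sym G^h − ½(K^h)²`. -/
theorem stmt9
    (Ω : Set (Fin 3 → ℝ)) (hΩopen : IsOpen Ω) (hΩbdd : Bornology.IsBounded Ω)
    (G K : ℝ → (Fin 3 → ℝ) → Matrix (Fin 3) (Fin 3) ℝ)
    (hmeas : ∀ h, AEStronglyMeasurable (fun x => G h x) (volume.restrict Ω) ∧
      AEStronglyMeasurable (fun x => K h x) (volume.restrict Ω))
    (hskew : ∀ h > (0:ℝ), ∀ᵐ x ∂(volume.restrict Ω), (K h x)ᵀ = -(K h x))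
    (hbdd : ∃ C : ℝ≥0∞, C < ⊤ ∧ ∀ᶠ h in nhdsWithin 0 (Set.Ioi 0),
      eLpNorm (fun x => frob (G h x)) 2 (volume.restrict Ω)
        + eLpNorm (fun x => frob (K h x)) 4 (volume.restrict Ω) ≤ C) :
    ∃ S : ℝ → Set (Fin 3 → ℝ),
      (∀ h, MeasurableSet (S h) ∧ S h ⊆ Ω) ∧
      Tendsto (fun h => volume (Ω \ S h)) (nhdsWithin 0 (Set.Ioi 0)) (nhds 0) ∧
      Tendsto
        (fun h => eLpNorm
          ((S h).indicator fun x =>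
            frob (strainE h (K h x) (G h x)
              - (symPart (G h x) - (1 / 2 : ℝ) • (K h x * K h x))))
          2 (volume.restrict Ω))
        (nhdsWithin 0 (Set.Ioi 0)) (nhds 0) := by
  classical
  obtain ⟨C, hCtop, hCbdd⟩ := hbdd
  set μ := volume.restrict Ω with hμ
  have hΩm : MeasurableSet Ω := hΩopen.measurableSet
  set Gm : ℝ → (Fin 3 → ℝ) → Matrix (Fin 3) (Fin 3) ℝ :=
    fun h => ((hmeas h).1).mk _ with hGm
  set Km : ℝ → (Fin 3 → ℝ) → Matrix (Fin 3) (Fin 3) ℝ :=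
    fun h => ((hmeas h).2).mk _ with hKm
  have haeG : ∀ h, (fun x => G h x) =ᵐ[μ] Gm h := fun h => ((hmeas h).1).ae_eq_mk
  have haeK : ∀ h, (fun x => K h x) =ᵐ[μ] Km h := fun h => ((hmeas h).2).ae_eq_mk
  have hGmm : ∀ h, Measurable fun x => frob (Gm h x) := fun h =>
    (continuous_frob.comp_stronglyMeasurable ((hmeas h).1).stronglyMeasurable_mk).measurable
  have hKmm : ∀ h, Measurable fun x => frob (Km h x) := fun h =>
    (continuous_frob.comp_stronglyMeasurable ((hmeas h).2).stronglyMeasurable_mk).measurable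
  set S : ℝ → Set (Fin 3 → ℝ) := fun h =>
    Ω ∩ ({x | Real.sqrt h * frob (Km h x) ≤ 1} ∩ {x | h * frob (Gm h x) ≤ 1}) with hS
  refine ⟨S, fun h => ⟨?_, Set.inter_subset_left⟩, ?_, ?_⟩
  · exact hΩm.inter ((measurableSet_le (measurable_const.mul (hKmm h)) measurable_const).inter
      (measurableSet_le (measurable_const.mul (hGmm h)) measurable_const))
  · -- measure of complement tends to 0
    have hev1 : ∀ᶠ h in nhdsWithin (0:ℝ) (Set.Ioi 0), volume (Ω \ S h) ≤
        ENNReal.ofReal (h ^ 2) * (C ^ (4:ℝ) + C ^ (2:ℝ)) := by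
      filter_upwards [hCbdd, self_mem_nhdsWithin] with h hC hmem
      have h0 : (0:ℝ) < h := hmem
      have hsub : Ω \ S h ⊆
          {x | 1 < Real.sqrt h * frob (Km h x)} ∪ {x | 1 < h * frob (Gm h x)} := by
        intro x hx
        rcases hx with ⟨hxΩ, hxn⟩
        by_contra hcon
        simp only [Set.mem_union, Set.mem_setOf_eq, not_or, not_lt] at hcon
        exact hxn ⟨hxΩ, hcon.1, hcon.2⟩
      have hKae : eLpNorm (fun x => frob (Km h x)) 4 μ
          = eLpNorm (fun x => frob (K h x)) 4 μ :=
        (eLpNorm_congr_ae ((haeK h).fun_comp frob)).symm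
      have hGae : eLpNorm (fun x => frob (Gm h x)) 2 μ
          = eLpNorm (fun x => frob (G h x)) 2 μ :=
        (eLpNorm_congr_ae ((haeG h).fun_comp frob)).symm
      have hKC : eLpNorm (fun x => frob (K h x)) 4 μ ≤ C :=
        le_trans le_add_self hC
      have hGC : eLpNorm (fun x => frob (G h x)) 2 μ ≤ C :=
        le_trans le_self_add hC
      have hb1 := meas_bound μ (fun x => frob (Km h x)) (hKmm h).aestronglyMeasurable
        (Real.sqrt h) (Real.sqrt_pos.2 h0) 4 (by norm_num) (by norm_num)
      have hb2 := meas_bound μ (fun x => frob (Gm h x)) (hGmm h).aestronglyMeasurable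
        h h0 2 (by norm_num) (by norm_num)
      have ht4 : ((4:ℝ≥0∞)).toReal = (4:ℝ) := by norm_num
      have ht2 : ((2:ℝ≥0∞)).toReal = (2:ℝ) := by norm_num
      rw [ht4, hKae] at hb1
      rw [ht2, hGae] at hb2
      have hsq4 : ENNReal.ofReal (Real.sqrt h) ^ (4:ℝ) = ENNReal.ofReal (h ^ 2) := by
        rw [ENNReal.ofReal_rpow_of_nonneg (Real.sqrt_nonneg h) (by norm_num)]
        congr 1
        rw [show (4:ℝ) = ((4:ℕ):ℝ) by norm_num, Real.rpow_natCast]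
        nlinarith [Real.sq_sqrt h0.le, Real.sqrt_nonneg h]
      have hsq2 : ENNReal.ofReal h ^ (2:ℝ) = ENNReal.ofReal (h ^ 2) := by
        rw [ENNReal.ofReal_rpow_of_nonneg h0.le (by norm_num)]
        congr 1
        rw [show (2:ℝ) = ((2:ℕ):ℝ) by norm_num, Real.rpow_natCast]
      rw [hsq4] at hb1
      rw [hsq2] at hb2
      have hC4 : eLpNorm (fun x => frob (K h x)) 4 μ ^ (4:ℝ) ≤ C ^ (4:ℝ) :=
        ENNReal.rpow_le_rpow hKC (by norm_num)
      have hC2 : eLpNorm (fun x => frob (G h x)) 2 μ ^ (2:ℝ) ≤ C ^ (2:ℝ) :=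
        ENNReal.rpow_le_rpow hGC (by norm_num)
      calc volume (Ω \ S h) = μ (Ω \ S h) := by
            rw [hμ, Measure.restrict_apply' hΩm,
              Set.inter_eq_left.2 Set.diff_subset]
        _ ≤ μ ({x | 1 < Real.sqrt h * frob (Km h x)} ∪ {x | 1 < h * frob (Gm h x)}) :=
            measure_mono hsub
        _ ≤ μ {x | 1 < Real.sqrt h * frob (Km h x)} + μ {x | 1 < h * frob (Gm h x)} :=
            measure_union_le _ _
        _ ≤ ENNReal.ofReal (h ^ 2) * (eLpNorm (fun x => frob (K h x)) 4 μ ^ (4:ℝ))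
            + ENNReal.ofReal (h ^ 2) * (eLpNorm (fun x => frob (G h x)) 2 μ ^ (2:ℝ)) :=
            add_le_add hb1 hb2
        _ ≤ ENNReal.ofReal (h ^ 2) * C ^ (4:ℝ) + ENNReal.ofReal (h ^ 2) * C ^ (2:ℝ) :=
            add_le_add (mul_le_mul_right hC4 _) (mul_le_mul_right hC2 _)
        _ = ENNReal.ofReal (h ^ 2) * (C ^ (4:ℝ) + C ^ (2:ℝ)) := by rw [mul_add]
    have hne : C ^ (4:ℝ) + C ^ (2:ℝ) ≠ ⊤ :=
      ENNReal.add_ne_top.2 ⟨ENNReal.rpow_ne_top_of_nonneg (by norm_num) hCtop.ne,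
        ENNReal.rpow_ne_top_of_nonneg (by norm_num) hCtop.ne⟩
    have h1 : Tendsto (fun h:ℝ => ENNReal.ofReal (h ^ 2)) (nhdsWithin 0 (Set.Ioi 0)) (nhds 0) := by
      have : Tendsto (fun h:ℝ => ENNReal.ofReal (h ^ 2)) (nhds 0) (nhds (ENNReal.ofReal (0 ^ 2))) :=
        (ENNReal.continuous_ofReal.tendsto _).comp ((continuous_pow 2).tendsto 0)
      simpa using this.mono_left nhdsWithin_le_nhds
    have hlim : Tendsto (fun h:ℝ => ENNReal.ofReal (h ^ 2) * (C ^ (4:ℝ) + C ^ (2:ℝ)))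
        (nhdsWithin 0 (Set.Ioi 0)) (nhds 0) := by
      simpa [zero_mul] using ENNReal.Tendsto.mul_const h1 (Or.inr hne)
    exact tendsto_of_tendsto_of_tendsto_of_le_of_le' tendsto_const_nhds hlim
      (Filter.Eventually.of_forall fun h => zero_le) hev1
  · -- L² smallness
    have hev2 : ∀ᶠ h in nhdsWithin (0:ℝ) (Set.Ioi 0),
        eLpNorm ((S h).indicator fun x =>
            frob (strainE h (K h x) (G h x)
              - (symPart (G h x) - (1 / 2 : ℝ) • (K h x * K h x)))) 2 μ ≤
          ENNReal.ofReal (17 * Real.sqrt h) * (C + C ^ (2:ℝ)) := by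
      filter_upwards [hCbdd, self_mem_nhdsWithin,
        Filter.eventually_iff.2 (Ioo_mem_nhdsGT (one_pos (α := ℝ)))]
        with h hC hmem hIoo
      have h0 : (0:ℝ) < h := hmem
      have h1 : h ≤ 1 := hIoo.2.le
      have hae : ∀ᵐ x ∂μ, ‖(S h).indicator (fun x =>
            frob (strainE h (K h x) (G h x)
              - (symPart (G h x) - (1 / 2 : ℝ) • (K h x * K h x)))) x‖ ≤
          ‖(17 * Real.sqrt h) * (frob (G h x) + frob (K h x) ^ 2)‖ := by
        filter_upwards [haeK h, haeG h, hskew h h0] with x hKx hGx hsx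
        have hrhs0 : 0 ≤ (17 * Real.sqrt h) * (frob (G h x) + frob (K h x) ^ 2) :=
          mul_nonneg (by positivity) (add_nonneg (frob_nonneg _) (sq_nonneg _))
        by_cases hx : x ∈ S h
        · rw [Set.indicator_of_mem hx]
          have hc1 : Real.sqrt h * frob (K h x) ≤ 1 := by
            rw [show K h x = Km h x from hKx]; exact hx.2.1
          have hc2 : h * frob (G h x) ≤ 1 := by
            rw [show G h x = Gm h x from hGx]; exact hx.2.2
          have hpb := pointwise_bound h h0 h1 (K h x) (G h x) hsx hc1 hc2
          rw [Real.norm_eq_abs, Real.norm_eq_abs, abs_of_nonneg (frob_nonneg _),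
            abs_of_nonneg hrhs0]
          exact hpb
        · rw [Set.indicator_of_notMem hx, norm_zero]
          exact norm_nonneg _
      have hmono := eLpNorm_mono_ae (p := 2) hae
      have hG' : AEStronglyMeasurable (fun x => frob (G h x)) μ :=
        continuous_frob.comp_aestronglyMeasurable (hmeas h).1
      have hK2' : AEStronglyMeasurable (fun x => frob (K h x) ^ 2) μ :=
        ((continuous_pow 2).comp continuous_frob).comp_aestronglyMeasurable (hmeas h).2
      have hKC : eLpNorm (fun x => frob (K h x)) 4 μ ≤ C := le_trans le_add_self hC
      have hGC : eLpNorm (fun x => frob (G h x)) 2 μ ≤ C := le_trans le_self_add hC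
      have hKnorm : eLpNorm (fun x => frob (K h x) ^ 2) 2 μ
          = eLpNorm (fun x => frob (K h x)) 4 μ ^ (2:ℝ) := by
        have heq : (fun x => frob (K h x) ^ 2) = fun x => ‖frob (K h x)‖ ^ (2:ℝ) := by
          funext x
          rw [Real.norm_eq_abs, abs_of_nonneg (frob_nonneg _),
            show (2:ℝ) = ((2:ℕ):ℝ) by norm_num, Real.rpow_natCast]
        rw [heq, eLpNorm_norm_rpow _ (by norm_num : (0:ℝ) < 2)]
        norm_num
      have hsmul : (fun x => (17 * Real.sqrt h) * (frob (G h x) + frob (K h x) ^ 2))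
          = (17 * Real.sqrt h : ℝ) • (fun x => frob (G h x) + frob (K h x) ^ 2) := rfl
      have hK4C : eLpNorm (fun x => frob (K h x)) 4 μ ^ (2:ℝ) ≤ C ^ (2:ℝ) :=
        ENNReal.rpow_le_rpow hKC (by norm_num)
      calc eLpNorm ((S h).indicator fun x =>
            frob (strainE h (K h x) (G h x)
              - (symPart (G h x) - (1 / 2 : ℝ) • (K h x * K h x)))) 2 μ
          ≤ eLpNorm (fun x => (17 * Real.sqrt h) * (frob (G h x) + frob (K h x) ^ 2)) 2 μ :=
            hmono
        _ = (‖(17 * Real.sqrt h : ℝ)‖₊ : ℝ≥0∞)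
            * eLpNorm (fun x => frob (G h x) + frob (K h x) ^ 2) 2 μ := by
            rw [hsmul, eLpNorm_const_smul]
            rfl
        _ ≤ (‖(17 * Real.sqrt h : ℝ)‖₊ : ℝ≥0∞)
            * (eLpNorm (fun x => frob (G h x)) 2 μ
              + eLpNorm (fun x => frob (K h x) ^ 2) 2 μ) :=
            mul_le_mul_right (eLpNorm_add_le hG' hK2' one_le_two) _
        _ ≤ ENNReal.ofReal (17 * Real.sqrt h) * (C + C ^ (2:ℝ)) := by
            rw [← enorm_eq_nnnorm, Real.enorm_eq_ofReal (by positivity)]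
            exact mul_le_mul_right (add_le_add hGC (hKnorm ▸ hK4C)) _
    have hne : C + C ^ (2:ℝ) ≠ ⊤ :=
      ENNReal.add_ne_top.2 ⟨hCtop.ne, ENNReal.rpow_ne_top_of_nonneg (by norm_num) hCtop.ne⟩
    have h1 : Tendsto (fun h:ℝ => ENNReal.ofReal (17 * Real.sqrt h))
        (nhdsWithin 0 (Set.Ioi 0)) (nhds 0) := by
      have : Tendsto (fun h:ℝ => ENNReal.ofReal (17 * Real.sqrt h)) (nhds 0)
          (nhds (ENNReal.ofReal (17 * Real.sqrt 0))) :=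
        (ENNReal.continuous_ofReal.tendsto _).comp
          ((continuous_const.mul Real.continuous_sqrt).tendsto 0)
      simpa using this.mono_left nhdsWithin_le_nhds
    have hlim : Tendsto (fun h:ℝ => ENNReal.ofReal (17 * Real.sqrt h) * (C + C ^ (2:ℝ)))
        (nhdsWithin 0 (Set.Ioi 0)) (nhds 0) := by
      simpa [zero_mul] using ENNReal.Tendsto.mul_const h1 (Or.inr hne)
    exact tendsto_of_tendsto_of_tendsto_of_le_of_le' tendsto_const_nhds hlim
      (Filter.Eventually.of_forall fun h => zero_le) hev2
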